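/- Let n ≥ k ≥ 1, let V• ∈ ℝ^{n×k} have orthonormal columns, let U ∈ ℝ^{n×k} have orthonormal columns, let W ∈ ℝ^{k×k} be orthogonal, and let ξ ∈ ℝ^{k×k} be diagonal with real entries. Let Q ∈ ℝ^{k×k} be any orthogonal matrix satisfying Q ξ Qᵀ = ξ (so that (UQ) ξ (WQ)ᵀ = U ξ Wᵀ). Then the value of the Grassmann exponential computed from the two factorizations coincides: V• (WQ) cos(ξ) (WQ)ᵀ + (UQ) sin(ξ) (WQ)ᵀ = V• W cos(ξ) Wᵀ + U sin(ξ) Wᵀ. -/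
import Mathlib


open Matrix

lemma comm_diag_fun {k : ℕ} (Q : Matrix (Fin k) (Fin k) ℝ) (d : Fin k → ℝ)
    (h : Q * Matrix.diagonal d = Matrix.diagonal d * Q) (f : ℝ → ℝ) :
    Q * Matrix.diagonal (fun i => f (d i)) = Matrix.diagonal (fun i => f (d i)) * Q := by
  ext i j
  have h' := congrFun (congrFun h i) j
  simp only [Matrix.mul_diagonal, Matrix.diagonal_mul] at h' ⊢
  rcases eq_or_ne (d j) (d i) with he | he
  · rw [he]; ring
  · have : Q i j = 0 := by
      by_contra hQ0
      exact he (mul_left_cancel₀ hQ0 (by linarith [h']))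
    simp [this]

/-- Invariance of the Grassmann exponential under the rotations of singular vectors
allowed by the non-uniqueness of the SVD: if `Q` is orthogonal with `Q ξ Qᵀ = ξ`, then
the value `V• W cos(ξ) Wᵀ + U sin(ξ) Wᵀ` computed from the factorization
`(UQ) ξ (WQ)ᵀ` coincides with the one computed from `U ξ Wᵀ`. -/
theorem grassmann_exp_svd_invariance (n k : ℕ) (hk : 1 ≤ k) (hkn : k ≤ n)
    (Vb U : Matrix (Fin n) (Fin k) ℝ)
    (hVb : Vbᵀ * Vb = 1) (hU : Uᵀ * U = 1)
    (W : Matrix (Fin k) (Fin k) ℝ) (hW : Wᵀ * W = 1) (hW' : W * Wᵀ = 1)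
    (d : Fin k → ℝ)
    (Q : Matrix (Fin k) (Fin k) ℝ) (hQ : Qᵀ * Q = 1) (hQ' : Q * Qᵀ = 1)
    (hcomm : Q * Matrix.diagonal d * Qᵀ = Matrix.diagonal d) :
    Vb * (W * Q) * Matrix.diagonal (fun i => Real.cos (d i)) * (W * Q)ᵀ
        + (U * Q) * Matrix.diagonal (fun i => Real.sin (d i)) * (W * Q)ᵀ
      = Vb * W * Matrix.diagonal (fun i => Real.cos (d i)) * Wᵀ
        + U * Matrix.diagonal (fun i => Real.sin (d i)) * Wᵀ := by
  have hc : Q * Matrix.diagonal d = Matrix.diagonal d * Q := by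
    calc Q * Matrix.diagonal d = Q * Matrix.diagonal d * Qᵀ * Q := by
          rw [Matrix.mul_assoc _ Qᵀ Q, hQ, Matrix.mul_one]
      _ = Matrix.diagonal d * Q := by rw [hcomm]
  have hcos := comm_diag_fun Q d hc Real.cos
  have hsin := comm_diag_fun Q d hc Real.sin
  have key : ∀ f : ℝ → ℝ,
      Q * Matrix.diagonal (fun i => f (d i)) * Qᵀ = Matrix.diagonal (fun i => f (d i)) := by
    intro f
    rw [comm_diag_fun Q d hc f, Matrix.mul_assoc, hQ', Matrix.mul_one]
  rw [Matrix.transpose_mul]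
  have e1 : Vb * (W * Q) * Matrix.diagonal (fun i => Real.cos (d i)) * (Qᵀ * Wᵀ)
      = Vb * W * Matrix.diagonal (fun i => Real.cos (d i)) * Wᵀ := by
    rw [show Vb * (W * Q) * Matrix.diagonal (fun i => Real.cos (d i)) * (Qᵀ * Wᵀ)
        = Vb * W * (Q * Matrix.diagonal (fun i => Real.cos (d i)) * Qᵀ) * Wᵀ by
      simp only [Matrix.mul_assoc], key]
  have e2 : U * Q * Matrix.diagonal (fun i => Real.sin (d i)) * (Qᵀ * Wᵀ)
      = U * Matrix.diagonal (fun i => Real.sin (d i)) * Wᵀ := by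
    rw [show U * Q * Matrix.diagonal (fun i => Real.sin (d i)) * (Qᵀ * Wᵀ)
        = U * (Q * Matrix.diagonal (fun i => Real.sin (d i)) * Qᵀ) * Wᵀ by
      simp only [Matrix.mul_assoc], key]
  rw [e1, e2]
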